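/- Let Ω be a probability space partitioned into sets Ω_1, Ω_2, … with μ(Ω_i) = 2^{-i}. Fix γ > 0 and a bounded sequence a = (a_i). Define W_{γ,a}(x,y) = 2^{iγ}·a_i if (x,y) ∈ Ω_i × Ω_i and 0 otherwise. Then for any connected graph F with m ≥ 1 edges and average degree 2/γ (i.e. v(F) = γ·m), one has t(F, |W_{γ,a}|) = ∑_i |a_i|^m = ‖a‖_m^m. -/

import Mathlib

open MeasureTheory

noncomputable def sym2ValNN {V Ω : Type*} (W : Ω → Ω → ENNReal) (x : V → Ω) :
    Sym2 V → ENNReal :=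
  Sym2.lift ⟨fun i j => (W (x i) (x j) + W (x j) (x i)) / 2, fun i j => by simp [add_comm]⟩

/-- Let `Ω` be a probability space partitioned into sets `A 0, A 1, …` with
`μ (A i) = 2^{-(i+1)}`.  Fix `γ > 0` and a bounded sequence `a`, and let `W` be the
kernel equal to `2^{(i+1)γ} · a i` on `A i × A i` and `0` elsewhere.  Then for any
connected graph `F` with `m ≥ 1` edges and average degree `2/γ` (i.e. `v(F) = γ·m`),
`t(F, |W|) = ∑ i, |a i| ^ m = ‖a‖_m ^ m` (as an identity in `[0, ∞]`). -/
theorem density_block_kernel {Ω : Type} [MeasurableSpace Ω] (μ : Measure Ω)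
    [IsProbabilityMeasure μ]
    (A : ℕ → Set Ω) (hmeas : ∀ i, MeasurableSet (A i))
    (hdisj : Pairwise (Function.onFun Disjoint A))
    (hcover : (⋃ i, A i) = Set.univ)
    (hμ : ∀ i, μ (A i) = ENNReal.ofReal ((1 / 2 : ℝ) ^ (i + 1)))
    (γ : ℝ) (hγ : 0 < γ) (a : ℕ → ℝ) (C : ℝ) (ha : ∀ i, |a i| ≤ C)
    (W : Ω → Ω → ℝ) (hWmeas : Measurable (Function.uncurry W))
    (hWval : ∀ i x y, x ∈ A i → y ∈ A i → W x y = 2 ^ (((i : ℝ) + 1) * γ) * a i)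
    (hWzero : ∀ x y, (¬ ∃ i, x ∈ A i ∧ y ∈ A i) → W x y = 0)
    {V : Type} [Fintype V] (F : SimpleGraph V) (hconn : F.Connected)
    (m : ℕ) (hm : m = F.edgeSet.ncard) (hm1 : 1 ≤ m)
    (hdeg : (Fintype.card V : ℝ) = γ * m) :
    ∫⁻ x : V → Ω, ∏ᶠ e ∈ F.edgeSet, sym2ValNN (fun u v => ENNReal.ofReal |W u v|) x e
        ∂(Measure.pi fun _ => μ)
      = ∑' i, ENNReal.ofReal (|a i| ^ m) := by
  classical
  set Wnn : Ω → Ω → ENNReal := fun u v => ENNReal.ofReal |W u v| with hWnn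
  -- basic facts
  have hex : ∀ x : Ω, ∃ i, x ∈ A i := by
    intro x
    have := hcover ▸ Set.mem_univ x
    exact Set.mem_iUnion.mp this
  have huniq : ∀ {x : Ω} {i j : ℕ}, x ∈ A i → x ∈ A j → i = j := by
    intro x i j hi hj
    by_contra h
    exact Set.disjoint_left.mp (hdisj h) hi hj
  have hWsymm : ∀ u v, W u v = W v u := by
    intro u v
    by_cases h : ∃ i, u ∈ A i ∧ v ∈ A i
    · obtain ⟨i, hu, hv⟩ := h
      rw [hWval i u v hu hv, hWval i v u hv hu]
    · rw [hWzero u v h, hWzero v u (by rintro ⟨i, h1, h2⟩; exact h ⟨i, h2, h1⟩)]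
  have hsym2 : ∀ (x : V → Ω) (u v : V), sym2ValNN Wnn x s(u,v) = Wnn (x u) (x v) := by
    intro x u v
    show (Wnn (x u) (x v) + Wnn (x v) (x u)) / 2 = _
    have : Wnn (x v) (x u) = Wnn (x u) (x v) := by simp only [hWnn, hWsymm (x v) (x u)]
    rw [this, ← two_mul, mul_div_assoc, ENNReal.mul_div_cancel two_ne_zero ENNReal.ofNat_ne_top]
  have hVpos : 0 < Fintype.card V := by
    rcases Nat.eq_zero_or_pos (Fintype.card V) with h | h
    · exfalso
      have h1 : (0:ℝ) = γ * m := by rw [← hdeg, h]; simp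
      have h2 : (0:ℝ) < γ * m := mul_pos hγ (by exact_mod_cast hm1)
      linarith
    · exact h
  have : Nonempty V := Fintype.card_pos_iff.mp hVpos
  obtain ⟨v₀⟩ := this
  set c : ℕ → ENNReal := fun i => ENNReal.ofReal (2 ^ (((i : ℝ) + 1) * γ) * |a i|) with hc
  -- pointwise identity
  have hpt : ∀ x : V → Ω, ∏ᶠ e ∈ F.edgeSet, sym2ValNN Wnn x e
      = ∑' i, Set.indicator (Set.univ.pi fun _ : V => A i) (fun _ => (c i) ^ m) x := by
    intro x
    by_cases hx : ∃ i, ∀ v, x v ∈ A i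
    · obtain ⟨i, hi⟩ := hx
      have hmem : x ∈ Set.univ.pi fun _ : V => A i := fun v _ => hi v
      rw [tsum_eq_single i ?_]
      · rw [Set.indicator_of_mem hmem]
        have hcongr : ∀ e ∈ F.edgeSet, sym2ValNN Wnn x e = c i := by
          intro e he
          induction e with
          | h u v =>
            rw [hsym2]
            have hadj : F.Adj u v := he
            rw [hWnn]
            simp only
            rw [hWval i (x u) (x v) (hi u) (hi v)]
            rw [hc]
            simp only
            congr 1
            rw [abs_mul, abs_of_pos (Real.rpow_pos_of_pos two_pos _)]
        rw [finprod_mem_congr rfl hcongr]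
        rw [← SimpleGraph.coe_edgeFinset, finprod_mem_coe_finset, Finset.prod_const]
        congr 1
        rw [hm, ← SimpleGraph.coe_edgeFinset, Set.ncard_coe_finset]
      · intro j hj
        apply Set.indicator_of_notMem
        intro hmemj
        exact hj (huniq (hmemj v₀ (Set.mem_univ _)) (hi v₀))
    · -- some edge has zero value
      have hedge : ∃ u v, F.Adj u v ∧ ¬ ∃ i, x u ∈ A i ∧ x v ∈ A i := by
        by_contra hall
        push_neg at hall
        obtain ⟨i₀, hi₀⟩ := hex (x v₀)
        apply hx
        refine ⟨i₀, fun v => ?_⟩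
        have hreach := (hconn v₀ v)
        obtain ⟨p⟩ := hreach
        clear hx
        induction p with
        | nil => exact hi₀
        | @cons u b v hadj p ih =>
          obtain ⟨j, hu, hb⟩ := hall u b hadj
          have := huniq hi₀ hu
          subst this
          exact ih hb
      obtain ⟨u, v, hadj, hnone⟩ := hedge
      have hzero : sym2ValNN Wnn x s(u,v) = 0 := by
        rw [hsym2, hWnn]
        simp only
        rw [hWzero _ _ hnone]
        simp
      have hLHS : ∏ᶠ e ∈ F.edgeSet, sym2ValNN Wnn x e = 0 := by
        rw [← SimpleGraph.coe_edgeFinset, finprod_mem_coe_finset]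
        exact Finset.prod_eq_zero (SimpleGraph.mem_edgeFinset.mpr hadj) hzero
      rw [hLHS]
      symm
      rw [ENNReal.summable.tsum_eq_zero_iff]
      intro i
      apply Set.indicator_of_notMem
      intro hmemi
      exact hx ⟨i, fun v => hmemi v (Set.mem_univ _)⟩
  -- integrate
  calc ∫⁻ x : V → Ω, ∏ᶠ e ∈ F.edgeSet, sym2ValNN Wnn x e ∂(Measure.pi fun _ => μ)
      = ∫⁻ x : V → Ω, ∑' i, Set.indicator (Set.univ.pi fun _ : V => A i)
          (fun _ => (c i) ^ m) x ∂(Measure.pi fun _ => μ) := lintegral_congr hpt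
    _ = ∑' i, ∫⁻ x : V → Ω, Set.indicator (Set.univ.pi fun _ : V => A i)
          (fun _ => (c i) ^ m) x ∂(Measure.pi fun _ => μ) := by
        apply lintegral_tsum
        intro i
        exact (measurable_const.indicator (MeasurableSet.univ_pi fun _ => hmeas i)).aemeasurable
    _ = ∑' i, (c i) ^ m * (Measure.pi fun _ : V => μ) (Set.univ.pi fun _ => A i) := by
        congr 1
        funext i
        rw [lintegral_indicator (MeasurableSet.univ_pi fun _ => hmeas i) _, setLIntegral_const]
    _ = ∑' i, (c i) ^ m * (ENNReal.ofReal ((1 / 2 : ℝ) ^ (i + 1))) ^ Fintype.card V := by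
        congr 1
        funext i
        rw [Measure.pi_pi]
        congr 1
        rw [Finset.prod_const, hμ i, Finset.card_univ]
    _ = ∑' i, ENNReal.ofReal (|a i| ^ m) := by
        congr 1
        funext i
        rw [hc]
        simp only
        rw [← ENNReal.ofReal_pow (by positivity), ← ENNReal.ofReal_pow (by positivity),
          ← ENNReal.ofReal_mul (by positivity)]
        congr 1
        have hcast : (((i+1) * Fintype.card V : ℕ) : ℝ) = ((i:ℝ)+1) * γ * m := by
          push_cast
          rw [hdeg]
          ring
        have hexp : ((2:ℝ) ^ (((i : ℝ) + 1) * γ)) ^ m * ((1 / 2 : ℝ) ^ (i + 1)) ^ Fintype.card V = 1 := by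
          rw [← Real.rpow_natCast ((2:ℝ) ^ (((i : ℝ) + 1) * γ)) m,
            ← Real.rpow_mul (by norm_num : (0:ℝ) ≤ 2)]
          rw [one_div, inv_pow, inv_pow, ← pow_mul, ← inv_pow,
            ← Real.rpow_natCast (2⁻¹ : ℝ) ((i+1) * Fintype.card V),
            Real.inv_rpow (by norm_num : (0:ℝ) ≤ 2),
            ← Real.rpow_neg (by norm_num : (0:ℝ) ≤ 2),
            ← Real.rpow_add two_pos,
            show ((i:ℝ)+1) * γ * (m:ℝ) + -((((i+1) * Fintype.card V : ℕ)) : ℝ) = 0 from by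
              rw [hcast]; ring]
          exact Real.rpow_zero 2
        calc (2 ^ (((i : ℝ) + 1) * γ) * |a i|) ^ m * ((1 / 2 : ℝ) ^ (i + 1)) ^ Fintype.card V
            = (((2:ℝ) ^ (((i : ℝ) + 1) * γ)) ^ m * ((1 / 2 : ℝ) ^ (i + 1)) ^ Fintype.card V)
              * |a i| ^ m := by ring
          _ = |a i| ^ m := by rw [hexp, one_mul]
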